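/- Let F be a finite extension of Q_2 with e = log_q [O_F : 2O_F]. Then 1 + P_F^{2e} is not contained in the set of squares of F*. More precisely, there exists b ∈ O_F* such that 1 + bπ^{2e} is not a square in F*. -/

import Mathlib

/-- Let `F` be a finite extension of `ℚ_2`, with nonarchimedean absolute value `v`
extending the `2`-adic norm, uniformizer `π` with `v π = q⁻¹`, and
`e` defined by `v 2 = q^{-e}`.  Then `1 + P_F^{2e}` is not contained in the set of
squares of `F^*`; more precisely there exists a unit `b` such that `1 + b π^{2e}`
is not a square in `F^*`. -/
theorem one_add_pow_two_e_not_square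
    (F : Type*) [Field F] [Algebra ℚ_[2] F] [FiniteDimensional ℚ_[2] F]
    (v : AbsoluteValue F ℝ)
    (hna : ∀ x y : F, v (x + y) ≤ max (v x) (v y))
    (hext : ∀ x : ℚ_[2], v (algebraMap ℚ_[2] F x) = ‖x‖)
    (q : ℕ) (hq : 1 < q)
    (π : F) (hπ : v π = (q : ℝ)⁻¹)
    (hdisc : ∀ x : F, x ≠ 0 → ∃ n : ℤ, v x = (q : ℝ) ^ n)
    (e : ℕ) (he : v 2 = (q : ℝ) ^ (-(e : ℤ))) :
    (¬ ∀ x : F, v (x - 1) ≤ (q : ℝ) ^ (-(2 * e : ℤ)) → ∃ y : F, y ^ 2 = x) ∧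
    ∃ b : F, v b = 1 ∧ ¬ ∃ y : F, y ^ 2 = 1 + b * π ^ (2 * e) := by
  classical
  have hq1 : (1:ℝ) < q := by exact_mod_cast hq
  have hq0 : (0:ℝ) < q := lt_trans one_pos hq1
  have hqi0 : (0:ℝ) < (q:ℝ)⁻¹ := by positivity
  have hqi1 : (q:ℝ)⁻¹ < 1 := by
    rw [inv_lt_one_iff₀]; exact Or.inr hq1
  -- v 2 = 1/2
  have hv2 : v 2 = 2⁻¹ := by
    have h := hext 2
    rw [map_ofNat] at h
    rw [h, show (2:ℚ_[2]) = ((2:ℕ):ℚ_[2]) by norm_num]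
    simpa using Padic.norm_p (p := 2)
  have hv2lt : v 2 < 1 := by rw [hv2]; norm_num
  have he0 : e ≠ 0 := by
    intro h; subst h; rw [hv2] at he; norm_num at he
  have hπ0 : π ≠ 0 := by
    intro h; rw [h, map_zero] at hπ; exact absurd hπ.symm (ne_of_gt hqi0)
  have hπe : v (π ^ e) = ((q:ℝ)⁻¹) ^ e := by rw [map_pow, hπ]
  have hπepos : (0:ℝ) < ((q:ℝ)⁻¹) ^ e := by positivity
  -- the unit a = 2 / π^e
  set a : F := 2 / π ^ e with ha_def
  have hqe : (q:ℝ) ^ (-(e:ℤ)) = ((q:ℝ)⁻¹) ^ e := by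
    rw [zpow_neg, zpow_natCast, inv_pow]
  have hva : v a = 1 := by
    rw [ha_def, map_div₀, hπe, he, hqe, div_self (ne_of_gt hπepos)]
  -- normed field structure
  letI : NormedField F := v.toNormedField
  have hnorm : ∀ x : F, ‖x‖ = v x := fun _ => rfl
  letI : NormedSpace ℚ_[2] F := by
    refine ⟨fun c x => ?_⟩
    rw [Algebra.smul_def]
    show v _ ≤ _
    rw [map_mul, hext]
    exact le_of_eq rfl
  haveI : ProperSpace F := FiniteDimensional.proper ℚ_[2] F
  -- residue classes
  letI sd : Setoid {x : F // v x ≤ 1} := ⟨fun x y => v (x.1 - y.1) < 1, by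
    constructor
    · intro x; simpa using zero_lt_one
    · intro x y h; rwa [v.map_sub]
    · intro x y z hxy hyz
      have h := hna (x.1 - y.1) (y.1 - z.1)
      rw [sub_add_sub_cancel] at h
      exact lt_of_le_of_lt h (max_lt hxy hyz)⟩
  haveI : Finite (Quotient sd) := by
    have hcomp : IsCompact (Metric.closedBall (0:F) 1) := isCompact_closedBall _ _
    obtain ⟨S, hSsub, hSfin, hScov⟩ := hcomp.elim_finite_subcover_image
      (fun s (_ : s ∈ Metric.closedBall (0:F) 1) => Metric.isOpen_ball (x := s) (ε := 1))
      (fun x hx => Set.mem_biUnion hx (Metric.mem_ball_self one_pos))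
    haveI := hSfin.to_subtype
    apply Finite.of_surjective (f := fun s : S =>
      if h : v (s.1) ≤ 1 then (Quotient.mk sd ⟨s.1, h⟩) else Quotient.mk sd ⟨0, by simp⟩)
    intro u
    obtain ⟨x, rfl⟩ := Quotient.exists_rep u
    have hx : x.1 ∈ Metric.closedBall (0:F) 1 := by
      simpa [Metric.mem_closedBall, dist_eq_norm, hnorm] using x.2
    obtain ⟨s, hsS, hxs⟩ := Set.mem_iUnion₂.mp (hScov hx)
    have hxs' : v (x.1 - s) < 1 := by
      simpa [Metric.mem_ball, dist_eq_norm, hnorm] using hxs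
    have hs1 : v s ≤ 1 := by
      have h := hna (s - x.1) x.1
      rw [sub_add_cancel] at h
      refine le_trans h (max_le (le_of_lt ?_) x.2)
      rwa [v.map_sub]
    refine ⟨⟨s, hsS⟩, ?_⟩
    dsimp only
    rw [dif_pos hs1]
    apply Quotient.sound
    show v (s - x.1) < 1
    rwa [v.map_sub]
  haveI : Fintype (Quotient sd) := Fintype.ofFinite _
  -- the quadratic map on residue classes
  have hOmem : ∀ x : {x : F // v x ≤ 1}, v (x.1^2 + a * x.1) ≤ 1 := by
    intro x
    refine le_trans (hna _ _) (max_le ?_ ?_)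
    · rw [map_pow]; exact pow_le_one₀ (v.nonneg _) x.2
    · rw [map_mul, hva, one_mul]; exact x.2
  have hplus : ∀ x : {x : F // v x ≤ 1}, v (x.1 + a) ≤ 1 := fun x =>
    le_trans (hna _ _) (max_le x.2 (le_of_eq hva))
  let fO : {x : F // v x ≤ 1} → {x : F // v x ≤ 1} := fun x => ⟨x.1^2 + a*x.1, hOmem x⟩
  have hfwd : ∀ x y, sd.r x y → sd.r (fO x) (fO y) := by
    intro x y h
    show v ((x.1^2 + a*x.1) - (y.1^2 + a*y.1)) < 1
    have hfac : (x.1^2 + a*x.1) - (y.1^2 + a*y.1) = (x.1 - y.1) * (x.1 + y.1 + a) := by ring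
    have hs3 : v (x.1 + y.1 + a) ≤ 1 :=
      le_trans (hna _ _) (max_le (le_trans (hna _ _) (max_le x.2 y.2)) (le_of_eq hva))
    rw [hfac, map_mul]
    calc v (x.1-y.1) * v (x.1+y.1+a) ≤ v (x.1-y.1) * 1 :=
          mul_le_mul_of_nonneg_left hs3 (v.nonneg _)
      _ < 1 := by rw [mul_one]; exact h
  let fb : Quotient sd → Quotient sd := Quotient.map fO hfwd
  let iO : {x : F // v x ≤ 1} → {x : F // v x ≤ 1} := fun x => ⟨x.1 + a, hplus x⟩
  have hiwd : ∀ x y, sd.r x y → sd.r (iO x) (iO y) := by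
    intro x y h
    show v ((x.1 + a) - (y.1 + a)) < 1
    have : (x.1 + a) - (y.1 + a) = x.1 - y.1 := by ring
    rwa [this]
  let ib : Quotient sd → Quotient sd := Quotient.map iO hiwd
  have k1 : ∀ u, ib u ≠ u := by
    intro u hcon
    obtain ⟨x, rfl⟩ := Quotient.exists_rep u
    have hex := Quotient.exact hcon
    have h2 : v a < 1 := by
      have : (x.1 + a) - x.1 = a := by ring
      rw [← this]; exact hex
    rw [hva] at h2; exact lt_irrefl 1 h2
  have k2 : ∀ u, fb (ib u) = fb u := by
    intro u
    obtain ⟨x, rfl⟩ := Quotient.exists_rep u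
    apply Quotient.sound
    show v (((x.1+a)^2 + a*(x.1+a)) - (x.1^2 + a*x.1)) < 1
    have hfac : ((x.1+a)^2 + a*(x.1+a)) - (x.1^2 + a*x.1) = 2*(a*(x.1+a)) := by ring
    rw [hfac, map_mul, map_mul, hva, one_mul]
    calc v 2 * v (x.1+a) ≤ v 2 * 1 := mul_le_mul_of_nonneg_left (hplus x) (v.nonneg 2)
      _ < 1 := by rw [mul_one]; exact hv2lt
  -- counting: the image of fb misses some class
  set img : Finset (Quotient sd) := Finset.univ.image fb with himg
  have htotal : Fintype.card (Quotient sd)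
      = ∑ u ∈ img, (Finset.univ.filter (fun z => fb z = u)).card := by
    rw [← Finset.card_univ]
    exact Finset.card_eq_sum_card_fiberwise
      (fun w _ => Finset.mem_image_of_mem fb (Finset.mem_univ w))
  have hcount : 2 * img.card ≤ Fintype.card (Quotient sd) := by
    rw [htotal]
    calc 2 * img.card = ∑ _u ∈ img, 2 := by rw [Finset.sum_const, smul_eq_mul, mul_comm]
      _ ≤ _ := by
        apply Finset.sum_le_sum
        intro u hu
        obtain ⟨w, _, rfl⟩ := Finset.mem_image.mp hu
        have hsub : ({w, ib w} : Finset _) ⊆ Finset.univ.filter (fun z => fb z = fb w) := by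
          intro z hz
          rcases Finset.mem_insert.mp hz with rfl | hz
          · exact Finset.mem_filter.mpr ⟨Finset.mem_univ _, rfl⟩
          · rw [Finset.mem_singleton.mp hz]
            exact Finset.mem_filter.mpr ⟨Finset.mem_univ _, k2 w⟩
        calc 2 = ({w, ib w} : Finset _).card := (Finset.card_pair (Ne.symm (k1 w))).symm
          _ ≤ _ := Finset.card_le_card hsub
  obtain ⟨c, hc⟩ : ∃ c : Quotient sd, c ∉ img := by
    by_contra hcon
    push_neg at hcon
    have huniv : img = Finset.univ := Finset.eq_univ_iff_forall.mpr hcon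
    rw [huniv, Finset.card_univ] at hcount
    have hpos : 0 < Fintype.card (Quotient sd) :=
      Fintype.card_pos_iff.mpr ⟨Quotient.mk sd ⟨0, by simp⟩⟩
    omega
  obtain ⟨x₀, hx₀⟩ := Quotient.exists_rep c
  have hmem0 : v (0:F) ≤ 1 := by simp
  have hx₀1 : v x₀.1 = 1 := by
    refine le_antisymm x₀.2 ?_
    by_contra hlt
    push_neg at hlt
    apply hc
    rw [← hx₀]
    refine Finset.mem_image.mpr ⟨Quotient.mk sd ⟨0, hmem0⟩, Finset.mem_univ _, ?_⟩
    show Quotient.mk sd (fO ⟨0, hmem0⟩) = Quotient.mk sd x₀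
    apply Quotient.sound
    show v (((0:F)^2 + a*0) - x₀.1) < 1
    have hr : ((0:F)^2 + a*0) - x₀.1 = -x₀.1 := by ring
    rw [hr, v.map_neg]
    exact hlt
  -- ultrametric: v (1 + w) = 1 when v w < 1
  have hub : ∀ w : F, v w < 1 → v (1 + w) = 1 := by
    intro w hw
    have hle : v (1 + w) ≤ 1 :=
      le_trans (hna 1 w) (max_le (le_of_eq (map_one v)) (le_of_lt hw))
    refine le_antisymm hle ?_
    by_contra hlt
    push_neg at hlt
    have h1 : v ((1 + w) + (-w)) ≤ max (v (1+w)) (v (-w)) := hna _ _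
    rw [add_neg_cancel_right, map_one, v.map_neg] at h1
    exact absurd h1 (not_le.mpr (max_lt hlt hw))
  -- the main claim
  have key : ¬ ∃ y : F, y ^ 2 = 1 + x₀.1 * π ^ (2 * e) := by
    rintro ⟨y, hy⟩
    have hvu : v (x₀.1 * π ^ (2*e)) = ((q:ℝ)⁻¹)^e * ((q:ℝ)⁻¹)^e := by
      rw [map_mul, map_pow, hx₀1, one_mul, hπ, two_mul, pow_add]
    have hplt : ((q:ℝ)⁻¹)^e < 1 := pow_lt_one₀ (le_of_lt hqi0) hqi1 he0
    have hvu1 : v (x₀.1 * π^(2*e)) < 1 := by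
      rw [hvu]; nlinarith [hπepos]
    have hvy2 : v (y^2) = 1 := by rw [hy]; exact hub _ hvu1
    obtain ⟨w, hw2, hwle⟩ : ∃ w : F, w^2 = y^2 ∧ v (w - 1) ≤ v (w + 1) := by
      rcases le_total (v (y-1)) (v (y+1)) with h | h
      · exact ⟨y, rfl, h⟩
      · refine ⟨-y, by ring, ?_⟩
        rw [show -y - 1 = -(y+1) by ring, show -y + 1 = -(y-1) by ring,
          v.map_neg, v.map_neg]
        exact h
    have hw2' : w^2 = 1 + x₀.1 * π^(2*e) := hw2.trans hy
    have hprod : v (w-1) * v (w+1) = ((q:ℝ)⁻¹)^e * ((q:ℝ)⁻¹)^e := by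
      rw [← map_mul, show (w-1)*(w+1) = x₀.1 * π^(2*e) by linear_combination hw2', hvu]
    have hz : v (w - 1) ≤ ((q:ℝ)⁻¹)^e := by
      nlinarith [v.nonneg (w-1), v.nonneg (w+1), hπepos]
    have hvt : v ((w-1)/π^e) ≤ 1 := by
      rw [map_div₀, hπe, div_le_one hπepos]
      exact hz
    have hπene : π ^ e ≠ 0 := pow_ne_zero _ hπ0
    have h2e : π^(2*e) = (π^e)^2 := by rw [← pow_mul, mul_comm]
    have hteq : ((w-1)/π^e)^2 + a * ((w-1)/π^e) = x₀.1 := by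
      rw [ha_def]
      have hstep : ((w-1)/π^e)^2 + (2/π^e) * ((w-1)/π^e) = (w^2 - 1)/(π^e)^2 := by
        field_simp
        ring
      rw [hstep, hw2', h2e]
      field_simp
      ring
    apply hc
    rw [← hx₀]
    refine Finset.mem_image.mpr ⟨Quotient.mk sd ⟨(w-1)/π^e, hvt⟩, Finset.mem_univ _, ?_⟩
    show Quotient.mk sd (fO ⟨(w-1)/π^e, hvt⟩) = Quotient.mk sd x₀
    congr 1
    exact Subtype.ext hteq
  refine ⟨?_, x₀.1, hx₀1, key⟩
  intro hall
  apply key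
  apply hall
  rw [add_sub_cancel_left, map_mul, map_pow, hx₀1, one_mul, hπ]
  rw [show (-(2*(e:ℤ))) = (-((2*e : ℕ)) : ℤ) by push_cast; ring, zpow_neg, zpow_natCast,
    ← inv_pow]
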